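/- Let X, Y, M be finite-valued random variables such that the joint distribution p_{XY} has full support (p(x,y) > 0 for all x ∈ 𝒳, y ∈ 𝒴), I(M; Y | X) = 0, and I(M; X | Y) = 0. Then I(M; (X, Y)) = 0. -/

import Mathlib

open scoped BigOperators

noncomputable section

/-- Probability that the random variable `X` takes the value `a`,
with respect to the probability mass function `p` on the finite sample space `Ω`. -/
def prob {Ω : Type*} [Fintype Ω] {α : Type*} [DecidableEq α]
    (p : Ω → ℝ) (X : Ω → α) (a : α) : ℝ :=
  ∑ ω, if X ω = a then p ω else 0

/-- Shannon entropy (base 2) of the random variable `X`. -/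
def ent {Ω : Type*} [Fintype Ω] {α : Type*} [Fintype α] [DecidableEq α]
    (p : Ω → ℝ) (X : Ω → α) : ℝ :=
  -∑ a, prob p X a * Real.logb 2 (prob p X a)

/-- Conditional entropy `H(X|Y)`. -/
def condEnt {Ω : Type*} [Fintype Ω] {α β : Type*} [Fintype α] [DecidableEq α]
    [Fintype β] [DecidableEq β] (p : Ω → ℝ) (X : Ω → α) (Y : Ω → β) : ℝ :=
  ent p (fun ω => (X ω, Y ω)) - ent p Y

/-- Mutual information `I(X;Y)`. -/
def mi {Ω : Type*} [Fintype Ω] {α β : Type*} [Fintype α] [DecidableEq α]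
    [Fintype β] [DecidableEq β] (p : Ω → ℝ) (X : Ω → α) (Y : Ω → β) : ℝ :=
  ent p X + ent p Y - ent p (fun ω => (X ω, Y ω))

/-- Conditional mutual information `I(X;Y|Z)`. -/
def cmi {Ω : Type*} [Fintype Ω] {α β γ : Type*} [Fintype α] [DecidableEq α]
    [Fintype β] [DecidableEq β] [Fintype γ] [DecidableEq γ]
    (p : Ω → ℝ) (X : Ω → α) (Y : Ω → β) (Z : Ω → γ) : ℝ :=
  ent p (fun ω => (X ω, Z ω)) + ent p (fun ω => (Y ω, Z ω))
    - ent p (fun ω => (X ω, Y ω, Z ω)) - ent p Z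

section aux
variable {Ω : Type*} [Fintype Ω] {α β γ : Type*}

lemma prob_nonneg [DecidableEq α] (p : Ω → ℝ) (hp : ∀ ω, 0 ≤ p ω) (X : Ω → α) (a : α) :
    0 ≤ prob p X a := by
  refine Finset.sum_nonneg fun ω _ => ?_
  split <;> simp [hp ω]

lemma sum_prob [Fintype α] [DecidableEq α] (p : Ω → ℝ) (X : Ω → α) :
    ∑ a, prob p X a = ∑ ω, p ω := by
  unfold prob
  rw [Finset.sum_comm]
  simp

lemma prob_le [DecidableEq α] [DecidableEq β] (p : Ω → ℝ) (hp : ∀ ω, 0 ≤ p ω)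
    {S : Ω → α} {T : Ω → β} {s : α} {t : β} (h : ∀ ω, T ω = t → S ω = s) :
    prob p T t ≤ prob p S s := by
  refine Finset.sum_le_sum fun ω _ => ?_
  by_cases hT : T ω = t
  · simp [hT, h ω hT]
  · simp only [hT, if_false]
    split <;> simp [hp ω]

lemma le_prob_apply [DecidableEq α] (p : Ω → ℝ) (hp : ∀ ω, 0 ≤ p ω) (W : Ω → α) (ω : Ω) :
    p ω ≤ prob p W (W ω) := by
  have := Finset.single_le_sum (f := fun ω' => if W ω' = W ω then p ω' else 0)
    (fun i _ => by split <;> simp [hp i]) (Finset.mem_univ ω)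
  simpa [prob] using this

lemma prob_congr [DecidableEq α] [DecidableEq β] (p : Ω → ℝ)
    {S : Ω → α} {T : Ω → β} {s : α} {t : β} (h : ∀ ω, T ω = t ↔ S ω = s) :
    prob p T t = prob p S s := by
  unfold prob
  exact Finset.sum_congr rfl fun ω _ => if_congr (h ω) rfl rfl

lemma sum_prob_pair_right [DecidableEq α] [DecidableEq β] [Fintype β]
    (p : Ω → ℝ) (A : Ω → α) (B : Ω → β) (a : α) :
    ∑ b, prob p (fun ω => (A ω, B ω)) (a, b) = prob p A a := by
  unfold prob
  rw [Finset.sum_comm]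
  refine Finset.sum_congr rfl fun ω _ => ?_
  simp [Prod.ext_iff, ite_and]

lemma sum_prob_pair_left [DecidableEq α] [DecidableEq β] [Fintype α]
    (p : Ω → ℝ) (A : Ω → α) (B : Ω → β) (b : β) :
    ∑ a, prob p (fun ω => (A ω, B ω)) (a, b) = prob p B b := by
  unfold prob
  rw [Finset.sum_comm]
  refine Finset.sum_congr rfl fun ω _ => ?_
  by_cases hB : B ω = b <;> simp [Prod.ext_iff, ite_and, hB]

lemma ent_eq [Fintype α] [DecidableEq α] (p : Ω → ℝ) (W : Ω → α) :
    ent p W = -∑ ω, p ω * Real.logb 2 (prob p W (W ω)) := by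
  unfold ent
  congr 1
  have : ∀ a, prob p W a * Real.logb 2 (prob p W a)
      = ∑ ω, (if W ω = a then p ω * Real.logb 2 (prob p W a) else 0) := by
    intro a
    rw [prob, Finset.sum_mul]
    exact Finset.sum_congr rfl fun ω _ => by split <;> simp
  rw [Finset.sum_congr rfl fun a _ => this a, Finset.sum_comm]
  simp

lemma sum_weighted [Fintype α] [DecidableEq α] (p : Ω → ℝ) (W : Ω → α) (g : α → ℝ) :
    ∑ ω, p ω * g (W ω) = ∑ a, prob p W a * g a := by
  have : ∀ a, prob p W a * g a = ∑ ω, (if W ω = a then p ω * g a else 0) := by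
    intro a
    rw [prob, Finset.sum_mul]
    exact Finset.sum_congr rfl fun ω _ => by split <;> simp
  rw [Finset.sum_congr rfl fun a _ => this a, Finset.sum_comm]
  simp

lemma gibbs {ι : Type*} [Fintype ι] (a b : ι → ℝ) (ha : ∀ i, 0 ≤ a i) (hb : ∀ i, 0 ≤ b i)
    (hab : ∀ i, b i = 0 → a i = 0) (hs : ∑ i, a i = ∑ i, b i)
    (h0 : ∑ i, (a i * Real.log (a i) - a i * Real.log (b i)) = 0) : ∀ i, a i = b i := by
  set t : ι → ℝ := fun i => a i * Real.log (a i) - a i * Real.log (b i) - a i + b i with ht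
  have key : ∀ i, 0 ≤ t i ∧ (t i = 0 → a i = b i) := by
    intro i
    rcases eq_or_lt_of_le (ha i) with h | h
    · constructor
      · simp [ht, ← h, hb i]
      · intro h0i; simp [ht, ← h] at h0i ⊢; linarith [h0i]
    · have hbi : 0 < b i := lt_of_le_of_ne (hb i) (fun e => by
        have := hab i e.symm; exact absurd this.symm (ne_of_lt h))
      have hx : 0 < b i / a i := div_pos hbi h
      have hlog : Real.log (b i / a i) ≤ b i / a i - 1 := Real.log_le_sub_one_of_pos hx
      have hlogdiv : Real.log (b i / a i) = Real.log (b i) - Real.log (a i) :=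
        Real.log_div (ne_of_gt hbi) (ne_of_gt h)
      constructor
      · have := mul_le_mul_of_nonneg_left hlog (le_of_lt h)
        rw [hlogdiv] at this
        have hba : a i * (b i / a i - 1) = b i - a i := by field_simp
        simp only [ht]
        nlinarith
      · intro h0i
        by_contra hne
        have hne' : b i / a i ≠ 1 := by
          intro e
          exact hne ((div_eq_one_iff_eq (ne_of_gt h)).mp e).symm
        have hstrict := Real.log_lt_sub_one_of_pos hx hne'
        rw [hlogdiv] at hstrict
        have := mul_lt_mul_of_pos_left hstrict h
        have hba : a i * (b i / a i - 1) = b i - a i := by field_simp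
        simp only [ht] at h0i
        nlinarith
  have hts : ∑ i, t i = 0 := by
    simp only [ht]
    rw [Finset.sum_add_distrib, Finset.sum_sub_distrib]
    rw [h0]
    simp [hs]
  have hz : ∀ i ∈ Finset.univ, t i = 0 :=
    (Finset.sum_eq_zero_iff_of_nonneg (fun i _ => (key i).1)).mp hts
  exact fun i => (key i).2 (hz i (Finset.mem_univ i))


lemma cond_indep [Fintype α] [DecidableEq α] [Fintype β] [DecidableEq β]
    [Fintype γ] [DecidableEq γ]
    (p : Ω → ℝ) (hp : ∀ ω, 0 ≤ p ω) (hsum : ∑ ω, p ω = 1)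
    (U : Ω → γ) (V : Ω → β) (W : Ω → α)
    (hW : ∀ w, 0 < prob p W w) (h : cmi p U V W = 0) :
    ∀ u v w, prob p (fun ω => (U ω, V ω, W ω)) (u, v, w) * prob p W w
      = prob p (fun ω => (U ω, W ω)) (u, w) * prob p (fun ω => (V ω, W ω)) (v, w) := by
  set f : γ × β × α → ℝ := prob p (fun ω => (U ω, V ω, W ω)) with hf
  set pUW : γ × α → ℝ := prob p (fun ω => (U ω, W ω)) with hpUW
  set pVW : β × α → ℝ := prob p (fun ω => (V ω, W ω)) with hpVW
  set pW : α → ℝ := prob p W with hpW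
  set g : γ × β × α → ℝ := fun t =>
    Real.logb 2 (f t) + Real.logb 2 (pW t.2.2)
      - Real.logb 2 (pUW (t.1, t.2.2)) - Real.logb 2 (pVW (t.2.1, t.2.2)) with hg
  set B : γ × β × α → ℝ := fun t => pUW (t.1, t.2.2) * pVW (t.2.1, t.2.2) / pW t.2.2 with hB
  -- step 1: cmi as weighted sum over Ω
  have step1 : cmi p U V W = ∑ ω, p ω * g (U ω, V ω, W ω) := by
    rw [cmi, ent_eq, ent_eq, ent_eq, ent_eq]
    have expand : ∀ ω : Ω, p ω * g (U ω, V ω, W ω)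
        = p ω * Real.logb 2 (f (U ω, V ω, W ω)) + p ω * Real.logb 2 (pW (W ω))
          - p ω * Real.logb 2 (pUW (U ω, W ω)) - p ω * Real.logb 2 (pVW (V ω, W ω)) := by
      intro ω; simp only [hg]; ring
    rw [Finset.sum_congr rfl fun ω _ => expand ω]
    rw [Finset.sum_sub_distrib, Finset.sum_sub_distrib, Finset.sum_add_distrib]
    simp only [hf, hpUW, hpVW, hpW]
    ring
  -- step 2: transfer to alphabet
  have step2 : cmi p U V W = ∑ t, f t * g t := by
    rw [step1, sum_weighted p (fun ω => (U ω, V ω, W ω)) g, hf]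
  -- step 3: into KL form
  have hlog2 : Real.log 2 ≠ 0 := by
    have : (1:ℝ) < 2 := one_lt_two
    exact ne_of_gt (Real.log_pos this)
  have fpos_imp : ∀ t : γ × β × α, 0 < f t →
      0 < pUW (t.1, t.2.2) ∧ 0 < pVW (t.2.1, t.2.2) := by
    rintro ⟨u, v, w⟩ hft
    constructor
    · exact lt_of_lt_of_le hft (prob_le p hp (fun ω h' => by
        simp only [Prod.mk.injEq] at h' ⊢; exact ⟨h'.1, h'.2.2⟩))
    · exact lt_of_lt_of_le hft (prob_le p hp (fun ω h' => by
        simp only [Prod.mk.injEq] at h' ⊢; exact ⟨h'.2.1, h'.2.2⟩))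
  have step3 : ∑ t, (f t * Real.log (f t) - f t * Real.log (B t)) = 0 := by
    have hterm : ∀ t : γ × β × α,
        f t * Real.log (f t) - f t * Real.log (B t) = (f t * g t) * Real.log 2 := by
      intro t
      by_cases hft : f t = 0
      · simp [hft]
      · have h0f : 0 ≤ f t := by rw [hf]; exact prob_nonneg p hp _ t
        have hftpos : 0 < f t := lt_of_le_of_ne h0f (Ne.symm hft)
        obtain ⟨hU, hV⟩ := fpos_imp t hftpos
        have hWpos := hW t.2.2
        have hBlog : Real.log (B t)
            = Real.log (pUW (t.1, t.2.2)) + Real.log (pVW (t.2.1, t.2.2))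
              - Real.log (pW t.2.2) := by
          rw [hB]; dsimp only
          rw [Real.log_div (by positivity) (ne_of_gt hWpos),
            Real.log_mul (ne_of_gt hU) (ne_of_gt hV)]
        rw [hBlog, hg]; dsimp only
        rw [Real.logb, Real.logb, Real.logb, Real.logb]
        field_simp
        ring
    rw [Finset.sum_congr rfl fun t _ => hterm t, ← Finset.sum_mul, ← step2, h, zero_mul]
  have ha : ∀ t, 0 ≤ f t := by intro t; rw [hf]; exact prob_nonneg p hp _ t
  have hbnn : ∀ t, 0 ≤ B t := by
    intro t; rw [hB]; dsimp only
    have h1 : 0 ≤ pUW (t.1, t.2.2) := by rw [hpUW]; exact prob_nonneg p hp _ _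
    have h2 : 0 ≤ pVW (t.2.1, t.2.2) := by rw [hpVW]; exact prob_nonneg p hp _ _
    exact div_nonneg (mul_nonneg h1 h2) (le_of_lt (hW _))
  have hab : ∀ t, B t = 0 → f t = 0 := by
    intro t hBt
    rw [hB] at hBt; dsimp only at hBt
    have hWne : pW t.2.2 ≠ 0 := ne_of_gt (hW t.2.2)
    rw [div_eq_zero_iff] at hBt
    rcases hBt with hBt | hBt
    · rcases mul_eq_zero.mp hBt with h' | h'
      · refine le_antisymm ?_ (ha t)
        calc f t ≤ pUW (t.1, t.2.2) := prob_le p hp (fun ω h'' => by subst h''; rfl)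
          _ = 0 := h'
      · refine le_antisymm ?_ (ha t)
        calc f t ≤ pVW (t.2.1, t.2.2) := prob_le p hp (fun ω h'' => by subst h''; rfl)
          _ = 0 := h'
    · exact absurd hBt hWne
  have hsumf : ∑ t, f t = 1 := by rw [hf, sum_prob, hsum]
  have hkey : ∀ w, ∑ u, ∑ v, pUW (u, w) * pVW (v, w) / pW w = pW w := by
    intro w
    have h1 : ∑ v, pVW (v, w) = pW w := sum_prob_pair_left p V W w
    have h2 : ∑ u, pUW (u, w) = pW w := sum_prob_pair_left p U W w
    have hne : pW w ≠ 0 := ne_of_gt (hW w)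
    calc ∑ u, ∑ v, pUW (u, w) * pVW (v, w) / pW w
        = ∑ u, pUW (u, w) * pW w / pW w := by
          refine Finset.sum_congr rfl fun u _ => ?_
          rw [← Finset.sum_div, ← Finset.mul_sum, h1]
      _ = ∑ u, pUW (u, w) := by
          refine Finset.sum_congr rfl fun u _ => ?_
          rw [mul_div_assoc, div_self hne, mul_one]
      _ = pW w := h2
  have hsumB : ∑ t, B t = 1 := by
    rw [hB]
    rw [Fintype.sum_prod_type]
    simp only [Fintype.sum_prod_type]
    calc ∑ u, ∑ v, ∑ w, pUW (u, w) * pVW (v, w) / pW w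
        = ∑ u, ∑ w, ∑ v, pUW (u, w) * pVW (v, w) / pW w := by
          exact Finset.sum_congr rfl fun u _ => Finset.sum_comm
      _ = ∑ w, ∑ u, ∑ v, pUW (u, w) * pVW (v, w) / pW w := Finset.sum_comm
      _ = ∑ w, pW w := Finset.sum_congr rfl fun w _ => hkey w
      _ = 1 := by rw [hpW, sum_prob, hsum]
  have heq := gibbs f B ha hbnn hab (by rw [hsumf, hsumB]) step3
  intro u v w
  have hfB := heq (u, v, w)
  rw [hB] at hfB; dsimp only at hfB
  rw [hfB, div_mul_cancel₀ _ (ne_of_gt (hW w))]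

end aux

theorem stmt7 {Ω : Type*} [Fintype Ω] {α β γ : Type*}
    [Fintype α] [DecidableEq α] [Fintype β] [DecidableEq β] [Fintype γ] [DecidableEq γ]
    (p : Ω → ℝ) (hp : ∀ ω, 0 ≤ p ω) (hsum : ∑ ω, p ω = 1)
    (X : Ω → α) (Y : Ω → β) (M : Ω → γ)
    (hfull : ∀ x y, 0 < prob p (fun ω => (X ω, Y ω)) (x, y))
    (h1 : cmi p M Y X = 0) (h2 : cmi p M X Y = 0) :
    mi p M (fun ω => (X ω, Y ω)) = 0 := by
  have hΩ : Nonempty Ω := by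
    by_contra h
    rw [not_nonempty_iff] at h
    rw [Finset.univ_eq_empty, Finset.sum_empty] at hsum
    exact one_ne_zero hsum.symm
  obtain ⟨ω₀⟩ := hΩ
  set x₀ := X ω₀
  set y₀ := Y ω₀
  have hXpos : ∀ x, 0 < prob p X x := fun x =>
    lt_of_lt_of_le (hfull x y₀) (prob_le p hp (fun ω h => congrArg Prod.fst h))
  have hYpos : ∀ y, 0 < prob p Y y := fun y =>
    lt_of_lt_of_le (hfull x₀ y) (prob_le p hp (fun ω h => congrArg Prod.snd h))
  have e1 := cond_indep p hp hsum M Y X hXpos h1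
  have e2 := cond_indep p hp hsum M X Y hYpos h2
  -- bridges
  have cA : ∀ m x y, prob p (fun ω => (M ω, Y ω, X ω)) (m, y, x)
      = prob p (fun ω => (M ω, X ω, Y ω)) (m, x, y) := by
    intro m x y
    refine prob_congr p fun ω => ?_
    simp only [Prod.ext_iff]
    tauto
  have cB : ∀ x y, prob p (fun ω => (Y ω, X ω)) (y, x)
      = prob p (fun ω => (X ω, Y ω)) (x, y) := by
    intro x y
    refine prob_congr p fun ω => ?_
    simp only [Prod.ext_iff]
    tauto
  -- simplified e1: a(m,y,x) * pX x = pMX(m,x) * pXY(x,y)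
  have e1' : ∀ m x y, prob p (fun ω => (M ω, Y ω, X ω)) (m, y, x) * prob p X x
      = prob p (fun ω => (M ω, X ω)) (m, x) * prob p (fun ω => (X ω, Y ω)) (x, y) := by
    intro m x y
    rw [e1 m y x, cB]
  have e2' : ∀ m x y, prob p (fun ω => (M ω, Y ω, X ω)) (m, y, x) * prob p Y y
      = prob p (fun ω => (M ω, Y ω)) (m, y) * prob p (fun ω => (X ω, Y ω)) (x, y) := by
    intro m x y
    rw [cA, e2 m x y]
  have hratio : ∀ m x y, prob p (fun ω => (M ω, X ω)) (m, x) * prob p Y y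
      = prob p (fun ω => (M ω, Y ω)) (m, y) * prob p X x := by
    intro m x y
    have hXYne : prob p (fun ω => (X ω, Y ω)) (x, y) ≠ 0 := ne_of_gt (hfull x y)
    apply mul_right_cancel₀ hXYne
    have ha1 := e1' m x y
    have ha2 := e2' m x y
    linear_combination prob p X x * ha2 - prob p Y y * ha1
  -- pMX (m,x) = pM m * pX x
  have hMX : ∀ m x, prob p (fun ω => (M ω, X ω)) (m, x) = prob p M m * prob p X x := by
    intro m x
    set c : γ → ℝ := fun m => prob p (fun ω => (M ω, Y ω)) (m, y₀) / prob p Y y₀ with hc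
    have hYne : prob p Y y₀ ≠ 0 := ne_of_gt (hYpos y₀)
    have hcx : ∀ m x, prob p (fun ω => (M ω, X ω)) (m, x) = c m * prob p X x := by
      intro m x
      rw [hc]
      dsimp only
      rw [div_mul_eq_mul_div, eq_div_iff hYne]
      linear_combination hratio m x y₀
    have hM : prob p M m = c m := by
      rw [← sum_prob_pair_right p M X m,
        Finset.sum_congr rfl fun x _ => hcx m x, ← Finset.mul_sum, sum_prob, hsum, mul_one]
    rw [hcx m x, hM]
  -- joint independence
  have hJ : ∀ m x y, prob p (fun ω => (M ω, X ω, Y ω)) (m, x, y)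
      = prob p M m * prob p (fun ω => (X ω, Y ω)) (x, y) := by
    intro m x y
    have hXne : prob p X x ≠ 0 := ne_of_gt (hXpos x)
    apply mul_right_cancel₀ hXne
    have := e1' m x y
    rw [← cA m x y]
    rw [this, hMX m x]
    ring
  -- conclude
  rw [mi, ent_eq, ent_eq, ent_eq]
  have expand : ∀ ω : Ω,
      p ω * Real.logb 2 (prob p (fun ω' => (M ω', X ω', Y ω')) (M ω, X ω, Y ω))
        = p ω * Real.logb 2 (prob p M (M ω))
          + p ω * Real.logb 2 (prob p (fun ω' => (X ω', Y ω')) (X ω, Y ω)) := by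
    intro ω
    rcases eq_or_lt_of_le (hp ω) with hω | hω
    · rw [← hω]; ring
    · have hMpos : 0 < prob p M (M ω) := lt_of_lt_of_le hω (le_prob_apply p hp M ω)
      have hZpos : 0 < prob p (fun ω' => (X ω', Y ω')) (X ω, Y ω) :=
        lt_of_lt_of_le hω (le_prob_apply p hp (fun ω' => (X ω', Y ω')) ω)
      rw [hJ (M ω) (X ω) (Y ω), Real.logb_mul (ne_of_gt hMpos) (ne_of_gt hZpos)]
      ring
  have : ∑ ω, p ω * Real.logb 2 (prob p (fun ω' => (M ω', X ω', Y ω')) (M ω, X ω, Y ω))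
      = ∑ ω, p ω * Real.logb 2 (prob p M (M ω))
        + ∑ ω, p ω * Real.logb 2 (prob p (fun ω' => (X ω', Y ω')) (X ω, Y ω)) := by
    rw [Finset.sum_congr rfl fun ω _ => expand ω, Finset.sum_add_distrib]
  rw [this]
  ring
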